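/- arXiv:1510.08276 — 6 statements merged into one kernel-verified Lean document; each statement's English description precedes it below -/
import Mathlib

section
/- Every prime finite simple graph contains an induced path on four vertices (an induced P4). -/
open SimpleGraph

/-- `M` is a module of `G`: every vertex outside `M` is adjacent to all
vertices of `M` or to none of them. -/
def IsModule {V : Type*} (G : SimpleGraph V) (M : Set V) : Prop :=
  ∀ x ∉ M, (∀ a ∈ M, G.Adj x a) ∨ (∀ a ∈ M, ¬ G.Adj x a)

/-- A module is strong if it overlaps no other module. -/
def IsStrongModule {V : Type*} (G : SimpleGraph V) (M : Set V) : Prop :=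
  IsModule G M ∧
    ∀ M' : Set V, IsModule G M' → (M ∩ M').Nonempty → M ⊆ M' ∨ M' ⊆ M

/-- A nonempty strong module ≠ V(G) whose only proper strong superset is V(G). -/
def IsMaximalStrongModule {V : Type*} (G : SimpleGraph V) (M : Set V) : Prop :=
  IsStrongModule G M ∧ M.Nonempty ∧ M ≠ Set.univ ∧
    ∀ M' : Set V, IsStrongModule G M' → M ⊂ M' → M' = Set.univ

/-- Quotient graph defined by a family `P` of vertex sets: two members are
adjacent iff they are distinct and completely adjacent in `G`. -/
def QuotientOn {V : Type*} (G : SimpleGraph V) (P : Set (Set V)) : SimpleGraph P where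
  Adj A B := A ≠ B ∧ ∀ a ∈ (A : Set V), ∀ b ∈ (B : Set V), G.Adj a b
  symm := by
    constructor
    intro A B h
    exact ⟨Ne.symm h.1, fun b hb a ha => (h.2 a ha b hb).symm⟩
  loopless := by
    constructor
    intro A h
    exact h.1 rfl

/-- The quotient graph Q̃(G), on the maximal strong modules of `G`. -/
def QuotientGraph {V : Type*} (G : SimpleGraph V) :
    SimpleGraph {M : Set V | IsMaximalStrongModule G M} :=
  QuotientOn G {M : Set V | IsMaximalStrongModule G M}

/-- A graph is prime if it has at least four vertices and all its modules are
trivial (empty, singletons, or the whole vertex set). -/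
def IsPrimeGraph {W : Type*} (H : SimpleGraph W) : Prop :=
  4 ≤ Nat.card W ∧
    ∀ M : Set W, IsModule H M → M = ∅ ∨ M = Set.univ ∨ ∃ w, M = {w}

/-- `G` contains an induced copy of `H`. -/
def HasInducedCopy {W V : Type*} (H : SimpleGraph W) (G : SimpleGraph V) : Prop :=
  ∃ f : W ↪ V, ∀ a b : W, G.Adj (f a) (f b) ↔ H.Adj a b

/-- The path on four vertices. -/
def GraphP4 : SimpleGraph (Fin 4) :=
  SimpleGraph.fromRel fun a b =>
    (a, b) ∈ ([(0, 1), (1, 2), (2, 3)] : List (Fin 4 × Fin 4))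

/-- The cycle on four vertices. -/
def GraphC4 : SimpleGraph (Fin 4) :=
  SimpleGraph.fromRel fun a b =>
    (a, b) ∈ ([(0, 1), (1, 2), (2, 3), (0, 3)] : List (Fin 4 × Fin 4))

/-- The bull: triangle 0,1,2 with pendant 3 at 0 and pendant 4 at 2. -/
def GraphBull : SimpleGraph (Fin 5) :=
  SimpleGraph.fromRel fun a b =>
    (a, b) ∈ ([(0, 1), (0, 2), (1, 2), (0, 3), (2, 4)] : List (Fin 5 × Fin 5))

/-- The dart: triangle 0,1,2; vertex 4 adjacent exactly to 0 and 2;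
vertex 3 adjacent exactly to 0. -/
def GraphDart : SimpleGraph (Fin 5) :=
  SimpleGraph.fromRel fun a b =>
    (a, b) ∈ ([(0, 1), (0, 2), (1, 2), (0, 4), (2, 4), (0, 3)] : List (Fin 5 × Fin 5))

/-- The fox: adjacent vertices 0,1 and pairwise nonadjacent 2,3,4, each
adjacent to both 0 and 1 (K5 minus a triangle). -/
def GraphFox : SimpleGraph (Fin 5) :=
  SimpleGraph.fromRel fun a b =>
    (a, b) ∈ ([(0, 1), (0, 2), (0, 3), (0, 4), (1, 2), (1, 3), (1, 4)] : List (Fin 5 × Fin 5))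

/-- The gem: induced path 0-1-2-3 plus vertex 4 adjacent to all of them. -/
def GraphGem : SimpleGraph (Fin 5) :=
  SimpleGraph.fromRel fun a b =>
    (a, b) ∈ ([(0, 1), (1, 2), (2, 3), (0, 4), (1, 4), (2, 4), (3, 4)] : List (Fin 5 × Fin 5))

/-- `G` has no induced subgraph isomorphic to a member of
F = {C4, bull, dart, fox, gem}. -/
def FFree {V : Type*} (G : SimpleGraph V) : Prop :=
  ¬ HasInducedCopy GraphC4 G ∧ ¬ HasInducedCopy GraphBull G ∧
  ¬ HasInducedCopy GraphDart G ∧ ¬ HasInducedCopy GraphFox G ∧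
  ¬ HasInducedCopy GraphGem G

/-- `X` is an association set of `G`: the graph `G - X` has no induced `P₃`,
i.e., every component of `G - X` is a clique. -/
def IsAssociationSet {V : Type*} (G : SimpleGraph V) (X : Set V) : Prop :=
  ∀ a b c : V, a ∉ X → b ∉ X → c ∉ X →
    G.Adj a b → G.Adj b c → a ≠ c → G.Adj a c

/-- `X` is a dissociation set of `G`: the graph `G - X` has no `P₃` subgraph,
i.e., every component of `G - X` has at most two vertices. -/
def IsDissociationSet {V : Type*} (G : SimpleGraph V) (X : Set V) : Prop :=
  ∀ a b c : V, a ∉ X → b ∉ X → c ∉ X → G.Adj a b → G.Adj b c → a = c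

/-- Minimum cardinality of an association set of `G`. -/
noncomputable def optAsso {V : Type*} (G : SimpleGraph V) : ℕ :=
  sInf {n : ℕ | ∃ X : Set V, IsAssociationSet G X ∧ X.ncard = n}

/-- Minimum cardinality of a dissociation set of `G`. -/
noncomputable def optDiss {V : Type*} (G : SimpleGraph V) : ℕ :=
  sInf {n : ℕ | ∃ X : Set V, IsDissociationSet G X ∧ X.ncard = n}

section Aux

variable {W : Type*}

/-- Reachability within a finite vertex set `s`. -/
def ReachIn (G : SimpleGraph W) (s : Finset W) : W → W → Prop :=
  Relation.ReflTransGen (fun x y => x ∈ s ∧ y ∈ s ∧ G.Adj x y)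

namespace ReachIn

variable {G : SimpleGraph W} {s : Finset W} {a b c : W}

lemma refl : ReachIn G s a a := Relation.ReflTransGen.refl

lemma single (h : a ∈ s ∧ b ∈ s ∧ G.Adj a b) : ReachIn G s a b :=
  Relation.ReflTransGen.single h

lemma tail (h : ReachIn G s a b) (h' : b ∈ s ∧ c ∈ s ∧ G.Adj b c) :
    ReachIn G s a c := Relation.ReflTransGen.tail h h'

lemma head (h' : a ∈ s ∧ b ∈ s ∧ G.Adj a b) (h : ReachIn G s b c) :
    ReachIn G s a c := Relation.ReflTransGen.head h' h

lemma trans (h : ReachIn G s a b) (h2 : ReachIn G s b c) : ReachIn G s a c :=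
  Relation.ReflTransGen.trans h h2

lemma symm (h : ReachIn G s a b) : ReachIn G s b a := by
  have hs : Symmetric (fun x y => x ∈ s ∧ y ∈ s ∧ G.Adj x y) :=
    fun x y h => ⟨h.2.1, h.1, h.2.2.symm⟩
  exact (@Relation.ReflTransGen.stdSymm _ _ ⟨hs⟩).symm _ _ h

lemma cases_head (h : ReachIn G s a b) :
    a = b ∨ ∃ c, (a ∈ s ∧ c ∈ s ∧ G.Adj a c) ∧ ReachIn G s c b :=
  Relation.ReflTransGen.cases_head h

end ReachIn

/-- Connectivity within a finite vertex set `s`. -/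
def ConnIn (G : SimpleGraph W) (s : Finset W) : Prop :=
  ∀ a ∈ s, ∀ b ∈ s, ReachIn G s a b

variable [DecidableEq W]

lemma exists_nbr {G : SimpleGraph W} {s : Finset W} {v y : W} :
    ∀ {x : W}, ReachIn G s x y → x ∈ s.erase v → ¬ ReachIn G (s.erase v) x y →
    ∃ a ∈ s.erase v, ReachIn G (s.erase v) x a ∧ G.Adj a v := by
  intro x h
  induction h using Relation.ReflTransGen.head_induction_on with
  | refl => exact fun _ hnr => absurd ReachIn.refl hnr
  | head step htail ih =>
      rename_i x' c
      intro hx hnr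
      obtain ⟨hxs, hcs, hadj⟩ := step
      by_cases hcv : c = v
      · exact ⟨x', hx, ReachIn.refl, hcv ▸ hadj⟩
      · have hc' : c ∈ s.erase v := Finset.mem_erase.2 ⟨hcv, hcs⟩
        by_cases hr : ReachIn G (s.erase v) c y
        · exact absurd (ReachIn.head ⟨hx, hc', hadj⟩ hr) hnr
        · obtain ⟨a, ha, hra, hav⟩ := ih hc' hr
          exact ⟨a, ha, ReachIn.head ⟨hx, hc', hadj⟩ hra, hav⟩

lemma boundary {G : SimpleGraph W} {s' : Finset W} {v a : W} :
    ∀ {x : W}, ReachIn G s' x a → ¬ G.Adj v x → G.Adj v a →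
    ∃ b ∈ s', ∃ a' ∈ s', ReachIn G s' x b ∧ ¬ G.Adj v b ∧ G.Adj v a' ∧ G.Adj b a' := by
  intro x h
  induction h using Relation.ReflTransGen.head_induction_on with
  | refl => exact fun hnx hva => absurd hva hnx
  | head step htail ih =>
      rename_i x' c
      intro hnx hva
      obtain ⟨hxs, hcs, hadj⟩ := step
      by_cases hvc : G.Adj v c
      · exact ⟨x', hxs, c, hcs, ReachIn.refl, hnx, hvc, hadj⟩
      · obtain ⟨b, hb, a', ha', hrb, h1, h2, h3⟩ := ih hvc hva
        exact ⟨b, hb, a', ha', ReachIn.head ⟨hxs, hcs, hadj⟩ hrb, h1, h2, h3⟩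

instance : DecidableRel GraphP4.Adj := fun a b =>
  decidable_of_iff _ (SimpleGraph.fromRel_adj _ a b).symm

lemma p4_copy {V : Type*} {G : SimpleGraph V} {x0 x1 x2 x3 : V}
    (a01 : G.Adj x0 x1) (a12 : G.Adj x1 x2) (a23 : G.Adj x2 x3)
    (n02 : ¬ G.Adj x0 x2) (n03 : ¬ G.Adj x0 x3) (n13 : ¬ G.Adj x1 x3)
    (e02 : x0 ≠ x2) (e03 : x0 ≠ x3) (e13 : x1 ≠ x3) :
    HasInducedCopy GraphP4 G := by
  have e01 := a01.ne
  have e12 := a12.ne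
  have e23 := a23.ne
  have e10 := e01.symm
  have e21 := e12.symm
  have e32 := e23.symm
  have e20 := e02.symm
  have e30 := e03.symm
  have e31 := e13.symm
  have a10 := a01.symm
  have a21 := a12.symm
  have a32 := a23.symm
  have n20 : ¬ G.Adj x2 x0 := fun h => n02 h.symm
  have n30 : ¬ G.Adj x3 x0 := fun h => n03 h.symm
  have n31 : ¬ G.Adj x3 x1 := fun h => n13 h.symm
  have l0 := G.loopless.irrefl x0
  have l1 := G.loopless.irrefl x1
  have l2 := G.loopless.irrefl x2
  have l3 := G.loopless.irrefl x3
  refine ⟨⟨![x0, x1, x2, x3], ?_⟩, ?_⟩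
  · intro i j hij
    fin_cases i <;> fin_cases j <;> simp_all
  · intro i j
    show G.Adj (![x0, x1, x2, x3] i) (![x0, x1, x2, x3] j) ↔ _
    fin_cases i <;> fin_cases j <;>
      simp [GraphP4, SimpleGraph.fromRel_adj] <;> simp_all

lemma copy_compl {V : Type*} {G : SimpleGraph V}
    (h : HasInducedCopy GraphP4 Gᶜ) : HasInducedCopy GraphP4 G := by
  obtain ⟨f, hf⟩ := h
  set σ : Fin 4 → Fin 4 := ![2, 0, 3, 1] with hσ
  have σinj : Function.Injective σ := by decide
  have key : ∀ a b : Fin 4,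
      GraphP4.Adj a b ↔ (σ a ≠ σ b ∧ ¬ GraphP4.Adj (σ a) (σ b)) := by decide
  have main : ∀ a b : Fin 4, G.Adj (f (σ a)) (f (σ b)) ↔ GraphP4.Adj a b := by
    intro a b
    have h1 := hf (σ a) (σ b)
    constructor
    · intro hadj
      refine (key a b).2 ⟨fun e => ?_, fun hp => ?_⟩
      · rw [e] at hadj; exact G.loopless.irrefl _ hadj
      · exact ((SimpleGraph.compl_adj _ _ _).1 (h1.2 hp)).2 hadj
    · intro hp
      obtain ⟨hne, hnp⟩ := (key a b).1 hp
      by_contra hnadj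
      exact hnp (h1.1 ((SimpleGraph.compl_adj _ _ _).2
        ⟨fun e => hne (f.injective e), hnadj⟩))
  exact ⟨⟨fun i => f (σ i), fun i j hij => σinj (f.injective hij)⟩, main⟩

lemma caseA {G : SimpleGraph W} {s : Finset W} {v : W} (hv : v ∈ s)
    (hG : ConnIn G s) (hGc : ConnIn Gᶜ s) {p q : W}
    (hp : p ∈ s.erase v) (hq : q ∈ s.erase v)
    (hpq : ¬ ReachIn G (s.erase v) p q) : HasInducedCopy GraphP4 G := by
  have hvs' : v ∉ s.erase v := Finset.notMem_erase v s
  by_cases hall : ∀ x ∈ s.erase v, G.Adj v x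
  · exfalso
    have hreach := hGc v hv p (Finset.mem_of_mem_erase hp)
    rcases hreach.cases_head with heq | ⟨c, ⟨_, hcs, hadj⟩, _⟩
    · exact hvs' (heq ▸ hp)
    · obtain ⟨hne, hna⟩ := (SimpleGraph.compl_adj _ _ _).1 hadj
      exact hna (hall c (Finset.mem_erase.2 ⟨fun e => hne e.symm, hcs⟩))
  · push_neg at hall
    obtain ⟨x, hx, hvx⟩ := hall
    have hxr : ∃ r ∈ s.erase v, ¬ ReachIn G (s.erase v) x r := by
      by_cases h1 : ReachIn G (s.erase v) x p
      · exact ⟨q, hq, fun h2 => hpq (h1.symm.trans h2)⟩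
      · exact ⟨p, hp, h1⟩
    obtain ⟨r, hr, hxrn⟩ := hxr
    have hxs : x ∈ s := Finset.mem_of_mem_erase hx
    have hrs : r ∈ s := Finset.mem_of_mem_erase hr
    obtain ⟨a, ha, hxa, hav⟩ := exists_nbr (hG x hxs r hrs) hx hxrn
    obtain ⟨b, hb, a', ha', hxb, hvb, hva', hba'⟩ := boundary hxa hvx hav.symm
    obtain ⟨c, hc, hrc, hcv⟩ :=
      exists_nbr (hG r hrs x hxs) hr (fun h => hxrn h.symm)
    have hxa' : ReachIn G (s.erase v) x a' := hxb.tail ⟨hb, ha', hba'⟩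
    have hnbc : ¬ G.Adj b c := fun h => hxrn ((hxb.tail ⟨hb, hc, h⟩).trans hrc.symm)
    have hna'c : ¬ G.Adj a' c := fun h => hxrn ((hxa'.tail ⟨ha', hc, h⟩).trans hrc.symm)
    have hnbv : ¬ G.Adj b v := fun h => hvb h.symm
    have hbnec : b ≠ c := fun e => hxrn ((e ▸ hxb).trans hrc.symm)
    have ha'nec : a' ≠ c := fun e => hxrn ((e ▸ hxa').trans hrc.symm)
    have hbnev : b ≠ v := fun e => hvs' (e ▸ hb)
    exact p4_copy hba' hva'.symm hcv.symm hnbv hnbc hna'c hbnev hbnec ha'nec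

lemma bothConn (G : SimpleGraph W) :
    ∀ s : Finset W, 2 ≤ s.card → ConnIn G s → ConnIn Gᶜ s →
      HasInducedCopy GraphP4 G := by
  intro s
  induction s using Finset.strongInduction with
  | _ s ih =>
    intro h2 hG hGc
    by_cases h3 : 3 ≤ s.card
    · obtain ⟨v, hv⟩ := Finset.card_pos.mp (show 0 < s.card by omega)
      have h2' : 2 ≤ (s.erase v).card := by
        rw [Finset.card_erase_of_mem hv]; omega
      by_cases hc1 : ConnIn G (s.erase v)
      · by_cases hc2 : ConnIn Gᶜ (s.erase v)
        · exact ih _ (Finset.erase_ssubset hv) h2' hc1 hc2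
        · unfold ConnIn at hc2; push_neg at hc2
          obtain ⟨p, hp, q, hq, hpq⟩ := hc2
          have hGcc : ConnIn Gᶜᶜ s := by rwa [compl_compl]
          exact copy_compl (caseA hv hGc hGcc hp hq hpq)
      · unfold ConnIn at hc1; push_neg at hc1
        obtain ⟨p, hp, q, hq, hpq⟩ := hc1
        exact caseA hv hG hGc hp hq hpq
    · have hcard2 : s.card = 2 := by omega
      obtain ⟨u, w, huw, rfl⟩ := Finset.card_eq_two.mp hcard2
      have hu : u ∈ ({u, w} : Finset W) := by simp
      have hw : w ∈ ({u, w} : Finset W) := by simp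
      exfalso
      have haij : G.Adj u w := by
        rcases (hG u hu w hw).cases_head with heq | ⟨c, ⟨_, hcs, hadj⟩, _⟩
        · exact absurd heq huw
        · rcases Finset.mem_insert.mp hcs with h | h
          · exact absurd (h ▸ hadj) (G.loopless.irrefl u)
          · exact (Finset.mem_singleton.mp h) ▸ hadj
      have hnaij : ¬ G.Adj u w := by
        rcases (hGc u hu w hw).cases_head with heq | ⟨c, ⟨_, hcs, hadj⟩, _⟩
        · exact absurd heq huw
        · obtain ⟨hne, hna⟩ := (SimpleGraph.compl_adj _ _ _).1 hadj
          rcases Finset.mem_insert.mp hcs with h | h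
          · exact absurd h.symm hne
          · exact (Finset.mem_singleton.mp h) ▸ hna
      exact hnaij haij

lemma module_of_compl {G : SimpleGraph W} {M : Set W}
    (hM : IsModule Gᶜ M) : IsModule G M := by
  intro x hx
  rcases hM x hx with h | h
  · exact Or.inr fun a ha hadj => ((SimpleGraph.compl_adj _ _ _).1 (h a ha)).2 hadj
  · left
    intro a ha
    by_contra hna
    exact h a ha ((SimpleGraph.compl_adj _ _ _).2
      ⟨fun e => hx (e ▸ ha), hna⟩)

lemma prime_conn [Fintype W] (G : SimpleGraph W) (hcard : 4 ≤ Nat.card W)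
    (hmod : ∀ M : Set W, IsModule G M → M = ∅ ∨ M = Set.univ ∨ ∃ w, M = {w}) :
    ConnIn G Finset.univ := by
  have hcard' : 4 ≤ Fintype.card W := by rwa [Nat.card_eq_fintype_card] at hcard
  intro a _ b _
  by_contra hab
  have hmodM : IsModule G {x | ReachIn G Finset.univ a x} := by
    intro x hx
    right
    intro m hm hadj
    exact hx (ReachIn.tail hm ⟨Finset.mem_univ _, Finset.mem_univ _, hadj.symm⟩)
  have haM : a ∈ {x | ReachIn G Finset.univ a x} := ReachIn.refl
  rcases hmod _ hmodM with h | h | ⟨w, h⟩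
  · rw [h] at haM; exact haM
  · have hbM : b ∈ {x | ReachIn G Finset.univ a x} := by rw [h]; trivial
    exact hab hbM
  · have haw : a = w := by rwa [h] at haM
    have hiso : ∀ y, ¬ G.Adj a y := by
      intro y hy
      have hyM : y ∈ {x | ReachIn G Finset.univ a x} :=
        ReachIn.single ⟨Finset.mem_univ _, Finset.mem_univ _, hy⟩
      rw [h, ← haw] at hyM
      exact G.loopless.irrefl a (hyM ▸ hy)
    have hmodM' : IsModule G {x | x ≠ a} := by
      intro x hx
      right
      intro m _
      have hxa : x = a := not_not.mp hx
      exact hxa ▸ hiso m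
    have : Nontrivial W := Fintype.one_lt_card_iff_nontrivial.mp (by omega)
    rcases hmod _ hmodM' with h' | h' | ⟨u, h'⟩
    · obtain ⟨y, hy⟩ := exists_ne a
      rw [Set.eq_empty_iff_forall_notMem] at h'
      exact h' y hy
    · have : a ∈ {x | x ≠ a} := h' ▸ Set.mem_univ a
      exact this rfl
    · have hsub : (Finset.univ : Finset W) ⊆ {a, u} := by
        intro z _
        by_cases hz : z = a
        · simp [hz]
        · have hzu : z = u := by
            have : z ∈ {x | x ≠ a} := hz
            rwa [h', Set.mem_singleton_iff] at this
          simp [hzu]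
      have hle := Finset.card_le_card hsub
      have hle2 : ({a, u} : Finset W).card ≤ 2 :=
        (Finset.card_insert_le _ _).trans (by simp)
      rw [Finset.card_univ] at hle
      omega

end Aux



/-- Every prime finite graph contains an induced `P₄`. -/
theorem stmt_9 {W : Type*} [Fintype W] (H : SimpleGraph W)
    (hp : IsPrimeGraph H) : HasInducedCopy GraphP4 H := by
  classical
  obtain ⟨hcard, hmod⟩ := hp
  have hcard' : 4 ≤ Fintype.card W := by rwa [Nat.card_eq_fintype_card] at hcard
  have h2 : 2 ≤ (Finset.univ : Finset W).card := by rw [Finset.card_univ]; omega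
  have hconn := prime_conn H hcard hmod
  have hmodc : ∀ M : Set W, IsModule Hᶜ M → M = ∅ ∨ M = Set.univ ∨ ∃ w, M = {w} :=
    fun M hM => hmod M (module_of_compl hM)
  have hconnc := prime_conn Hᶜ hcard hmodc
  exact bothConn H Finset.univ h2 hconn hconnc
end

section
/- Let G be a connected finite simple graph on at least two vertices. Then the quotient graph Q̃(G) is either a complete graph, or it is prime (it has at least four vertices and all of its modules are trivial). -/
open SimpleGraph

section GallaiAux

variable {V : Type*}

private lemma cross_walk {H : SimpleGraph V} {S : Set V} {y x : V} (p : H.Walk y x) :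
    y ∈ S → x ∉ S → ∃ u w, u ∈ S ∧ w ∉ S ∧ H.Adj u w := by
  induction p with
  | nil => intro hy hx; exact absurd hy hx
  | @cons a b c h q ih =>
    intro hy hx
    by_cases hb : b ∈ S
    · exact ih hb hx
    · exact ⟨a, b, hy, hb, h⟩

private lemma cross {H : SimpleGraph V} {S : Set V} {y x : V} (hr : H.Reachable y x)
    (hy : y ∈ S) (hx : x ∉ S) : ∃ u w, u ∈ S ∧ w ∉ S ∧ H.Adj u w := by
  obtain ⟨p⟩ := hr
  exact cross_walk p hy hx

private lemma isModule_union {G : SimpleGraph V} {A B : Set V} (hA : IsModule G A)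
    (hB : IsModule G B) (hAB : (A ∩ B).Nonempty) : IsModule G (A ∪ B) := by
  obtain ⟨z, hzA, hzB⟩ := hAB
  intro x hx
  have hxA : x ∉ A := fun h => hx (Or.inl h)
  have hxB : x ∉ B := fun h => hx (Or.inr h)
  rcases hA x hxA with h1 | h1 <;> rcases hB x hxB with h2 | h2
  · exact Or.inl (by rintro a (ha | ha); exacts [h1 a ha, h2 a ha])
  · exact absurd (h1 z hzA) (h2 z hzB)
  · exact absurd (h2 z hzB) (h1 z hzA)
  · exact Or.inr (by rintro a (ha | ha); exacts [h1 a ha, h2 a ha])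

private lemma maxStrong_eq_of_overlap {G : SimpleGraph V} {M N : Set V}
    (hM : IsMaximalStrongModule G M) (hN : IsMaximalStrongModule G N)
    (h : (M ∩ N).Nonempty) : M = N := by
  rcases hM.1.2 N hN.1.1 h with h1 | h1
  · by_cases he : M = N
    · exact he
    · exact absurd (hM.2.2.2 N hN.1 (Set.ssubset_iff_subset_ne.mpr ⟨h1, he⟩)) hN.2.2.1
  · by_cases he : N = M
    · exact he.symm
    · exact absurd (hN.2.2.2 M hM.1 (Set.ssubset_iff_subset_ne.mpr ⟨h1, he⟩)) hM.2.2.1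

private lemma module_dichotomy {G : SimpleGraph V} {A B : Set V} (hA : IsModule G A)
    (hB : IsModule G B) (hdisj : A ∩ B = ∅) (hAne : A.Nonempty) :
    (∀ a ∈ A, ∀ b ∈ B, G.Adj a b) ∨ (∀ a ∈ A, ∀ b ∈ B, ¬ G.Adj a b) := by
  obtain ⟨a0, ha0⟩ := hAne
  have ha0B : a0 ∉ B := fun h => (Set.eq_empty_iff_forall_notMem.mp hdisj a0) ⟨ha0, h⟩
  rcases hB a0 ha0B with h1 | h1
  · left
    intro a ha b hb
    have hbA : b ∉ A := fun h => (Set.eq_empty_iff_forall_notMem.mp hdisj b) ⟨h, hb⟩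
    rcases hA b hbA with h2 | h2
    · exact (h2 a ha).symm
    · exact absurd (h1 b hb).symm (h2 a0 ha0)
  · right
    intro a ha b hb
    have hbA : b ∉ A := fun h => (Set.eq_empty_iff_forall_notMem.mp hdisj b) ⟨h, hb⟩
    rcases hA b hbA with h2 | h2
    · exact absurd (h2 a0 ha0).symm (h1 b hb)
    · intro h; exact h2 a ha h.symm

/-- The connected component of `v` in `H`, as a vertex set. -/
private def GComp (H : SimpleGraph V) (v : V) : Set V := {w | H.Reachable v w}

private lemma mem_GComp {H : SimpleGraph V} {v w : V} :
    w ∈ GComp H v ↔ H.Reachable v w := Iff.rfl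

private lemma mem_GComp_self (H : SimpleGraph V) (v : V) : v ∈ GComp H v :=
  Reachable.refl v

private lemma GComp_eq {H : SimpleGraph V} {v w : V} (h : H.Reachable v w) :
    GComp H v = GComp H w :=
  Set.ext fun s => ⟨fun hs => h.symm.trans hs, fun hs => h.trans hs⟩

private lemma comp_adj_out {G : SimpleGraph V} {v x : V} (hx : x ∉ GComp Gᶜ v) :
    ∀ a ∈ GComp Gᶜ v, G.Adj x a := by
  intro a ha
  by_contra hadj
  have hne : x ≠ a := fun h => hx (h ▸ ha)
  have hca : Gᶜ.Adj a x := (compl_adj _ _ _).mpr ⟨hne.symm, fun h => hadj h.symm⟩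
  exact hx ((mem_GComp.mp ha).trans hca.reachable)

private lemma comp_module (G : SimpleGraph V) (v : V) : IsModule G (GComp Gᶜ v) :=
  fun _ hx => Or.inl (comp_adj_out hx)

private lemma comp_union_module (G : SimpleGraph V) (v t : V) :
    IsModule G (GComp Gᶜ v ∪ GComp Gᶜ t) := by
  intro x hx
  refine Or.inl ?_
  rintro a (ha | ha)
  · exact comp_adj_out (fun h => hx (Or.inl h)) a ha
  · exact comp_adj_out (fun h => hx (Or.inr h)) a ha

private lemma comp_strong (G : SimpleGraph V) (v : V) : IsStrongModule G (GComp Gᶜ v) := by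
  refine ⟨comp_module G v, ?_⟩
  rintro M' hM' ⟨x, hxc, hxM⟩
  by_contra hn
  push_neg at hn
  obtain ⟨hn1, hn2⟩ := hn
  obtain ⟨y, hyc, hyM⟩ := Set.not_subset.mp hn1
  obtain ⟨z, hzM, hzc⟩ := Set.not_subset.mp hn2
  have hr : Gᶜ.Reachable y x := (mem_GComp.mp hyc).symm.trans (mem_GComp.mp hxc)
  obtain ⟨u, w, hu, hw, huw⟩ := cross (S := GComp Gᶜ v \ M') hr ⟨hyc, hyM⟩ (fun h => h.2 hxM)
  have huc : u ∈ GComp Gᶜ v := hu.1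
  have huM : u ∉ M' := hu.2
  have hwc : w ∈ GComp Gᶜ v := (mem_GComp.mp huc).trans huw.reachable
  have hwM : w ∈ M' := by
    by_contra h; exact hw ⟨hwc, h⟩
  rcases hM' u huM with hall | hnone
  · exact ((compl_adj _ _ _).mp huw).2 (hall w hwM)
  · have hne : u ≠ z := fun h => hzc (h ▸ huc)
    have hca : Gᶜ.Adj u z := (compl_adj _ _ _).mpr ⟨hne, hnone z hzM⟩
    exact hzc ((mem_GComp.mp huc).trans hca.reachable)

private lemma comp_strict (G : SimpleGraph V) (v : V) {M' : Set V}
    (hM' : IsStrongModule G M') (hss : GComp Gᶜ v ⊂ M') : M' = Set.univ := by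
  by_contra hne
  obtain ⟨t, ht⟩ : ∃ t, t ∉ M' := by
    by_contra h; push_neg at h; exact hne (Set.eq_univ_iff_forall.mpr h)
  have hvM : v ∈ M' := hss.subset (mem_GComp_self Gᶜ v)
  have hdisj : ∀ s ∈ GComp Gᶜ t, s ∉ M' := by
    intro s hs hsM
    rcases hM'.2 (GComp Gᶜ t) (comp_module G t) ⟨s, hsM, hs⟩ with h | h
    · have hvt : v ∈ GComp Gᶜ t := h hvM
      have htv : t ∈ GComp Gᶜ v := (mem_GComp.mp hvt).symm
      exact ht (hss.subset htv)
    · exact ht (h (mem_GComp_self Gᶜ t))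
  rcases hM'.2 (GComp Gᶜ v ∪ GComp Gᶜ t) (comp_union_module G v t)
      ⟨v, hvM, Or.inl (mem_GComp_self Gᶜ v)⟩ with h | h
  · obtain ⟨z, hzM, hzc⟩ := Set.exists_of_ssubset hss
    rcases h hzM with hz | hz
    · exact hzc hz
    · exact hdisj z hz hzM
  · exact ht (h (Or.inr (mem_GComp_self Gᶜ t)))

private lemma part_eq_comp (G : SimpleGraph V) (hcc : ¬ Gᶜ.Preconnected) {Aset : Set V}
    (hA : IsMaximalStrongModule G Aset) {v : V} (hv : v ∈ Aset) :
    Aset = GComp Gᶜ v := by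
  have hcu : GComp Gᶜ v ≠ Set.univ := by
    intro h
    apply hcc
    intro a b
    have ha : a ∈ GComp Gᶜ v := h.symm ▸ Set.mem_univ a
    have hb : b ∈ GComp Gᶜ v := h.symm ▸ Set.mem_univ b
    exact (mem_GComp.mp ha).symm.trans (mem_GComp.mp hb)
  rcases hA.1.2 (GComp Gᶜ v) (comp_module G v) ⟨v, hv, mem_GComp_self Gᶜ v⟩ with h | h
  · by_cases he : Aset = GComp Gᶜ v
    · exact he
    · exact absurd (hA.2.2.2 _ (comp_strong G v) (Set.ssubset_iff_subset_ne.mpr ⟨h, he⟩)) hcu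
  · by_cases he : GComp Gᶜ v = Aset
    · exact he.symm
    · exact absurd (comp_strict G v hA.1 (Set.ssubset_iff_subset_ne.mpr ⟨h, he⟩)) hA.2.2.1

private lemma union_ne_univ (G : SimpleGraph V) (hc : G.Preconnected)
    (hcc : Gᶜ.Preconnected) {A B : Set V} (hA : IsModule G A) (hB : IsModule G B)
    (hAu : A ≠ Set.univ) (hBu : B ≠ Set.univ) : A ∪ B ≠ Set.univ := by
  intro hU
  obtain ⟨x0, hx0⟩ : ∃ x, x ∉ B := by
    by_contra h; push_neg at h; exact hBu (Set.eq_univ_iff_forall.mpr h)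
  obtain ⟨y0, hy0⟩ : ∃ y, y ∉ A := by
    by_contra h; push_neg at h; exact hAu (Set.eq_univ_iff_forall.mpr h)
  have hmemU : ∀ t : V, t ∈ A ∨ t ∈ B := fun t => Set.eq_univ_iff_forall.mp hU t
  have hx0A : x0 ∈ A := (hmemU x0).resolve_right hx0
  have hy0B : y0 ∈ B := (hmemU y0).resolve_left hy0
  rcases hB x0 hx0 with hall | hnone
  · have c1 : ∀ y ∉ A, ∀ a ∈ A, G.Adj y a := by
      intro y hy
      have hyB : y ∈ B := (hmemU y).resolve_left hy
      rcases hA y hy with h | h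
      · exact h
      · exact absurd (hall y hyB).symm (h x0 hx0A)
    have c2 : ∀ x ∉ B, ∀ b ∈ B, G.Adj x b := by
      intro x hx
      have hxA : x ∈ A := (hmemU x).resolve_right hx
      rcases hB x hx with h | h
      · exact h
      · exact absurd (c1 y0 hy0 x hxA).symm (h y0 hy0B)
    obtain ⟨u, w, hu, hw, huw⟩ := cross (S := {t | t ∉ B}) (hcc x0 y0) hx0 (fun h => h hy0B)
    exact ((compl_adj _ _ _).mp huw).2 (c2 u hu w (not_not.mp hw))
  · have c1 : ∀ y ∉ A, ∀ a ∈ A, ¬ G.Adj y a := by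
      intro y hy
      have hyB : y ∈ B := (hmemU y).resolve_left hy
      rcases hA y hy with h | h
      · exact absurd (h x0 hx0A).symm (hnone y hyB)
      · exact h
    have c2 : ∀ x ∉ B, ∀ b ∈ B, ¬ G.Adj x b := by
      intro x hx
      have hxA : x ∈ A := (hmemU x).resolve_right hx
      rcases hB x hx with h | h
      · exact absurd (h y0 hy0B).symm (c1 y0 hy0 x hxA)
      · exact h
    obtain ⟨u, w, hu, hw, huw⟩ := cross (S := {t | t ∉ B}) (hc x0 y0) hx0 (fun h => h hy0B)
    exact c2 u hu w (not_not.mp hw) huw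

private lemma exists_part (G : SimpleGraph V) [Finite V] (hc : G.Preconnected)
    (hcc : Gᶜ.Preconnected) (hcard : ∀ v : V, ∃ w : V, w ≠ v) (v : V) :
    ∃ Aset : Set V, IsMaximalStrongModule G Aset ∧ v ∈ Aset ∧
      ∀ B : Set V, IsModule G B → B ≠ Set.univ → v ∈ B → B ⊆ Aset := by
  classical
  set fam : Set (Set V) := {M | IsModule G M ∧ M ≠ Set.univ ∧ v ∈ M} with hfam
  have hne : fam.Nonempty := by
    refine ⟨{v}, ⟨?_, ?_, rfl⟩⟩
    · intro x hx
      by_cases h : G.Adj x v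
      · exact Or.inl (by rintro a rfl; exact h)
      · exact Or.inr (by rintro a rfl; exact h)
    · intro h
      obtain ⟨w, hw⟩ := hcard v
      have hwv : w ∈ ({v} : Set V) := by rw [h]; exact Set.mem_univ w
      exact hw hwv
  obtain ⟨Aset, hAf, hAmaxl⟩ := Set.Finite.exists_maximalFor id fam (Set.toFinite fam) hne
  obtain ⟨hAmod, hAuniv, hAv⟩ := hAf
  have hcontain : ∀ B : Set V, IsModule G B → B ≠ Set.univ → v ∈ B → B ⊆ Aset := by
    intro B hBmod hBuniv hBv
    have hUmod : IsModule G (Aset ∪ B) := isModule_union hAmod hBmod ⟨v, hAv, hBv⟩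
    have hUuniv : Aset ∪ B ≠ Set.univ := union_ne_univ G hc hcc hAmod hBmod hAuniv hBuniv
    have heq := hAmaxl (show Aset ∪ B ∈ fam from ⟨hUmod, hUuniv, Or.inl hAv⟩) Set.subset_union_left
    intro b hb
    have h2 : Aset ∪ B = Aset := subset_antisymm heq Set.subset_union_left
    rw [← h2]
    exact Or.inr hb
  have hstrong : IsStrongModule G Aset := by
    refine ⟨hAmod, ?_⟩
    intro M' hM'mod hov
    by_cases hMu : M' = Set.univ
    · exact Or.inl (hMu ▸ Set.subset_univ Aset)
    · refine Or.inr ?_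
      have hUmod : IsModule G (Aset ∪ M') := isModule_union hAmod hM'mod hov
      have hUuniv := union_ne_univ G hc hcc hAmod hM'mod hAuniv hMu
      have heq := hAmaxl (show Aset ∪ M' ∈ fam from ⟨hUmod, hUuniv, Or.inl hAv⟩) Set.subset_union_left
      intro b hb
      have h2 : Aset ∪ M' = Aset := subset_antisymm heq Set.subset_union_left
      rw [← h2]
      exact Or.inr hb
  refine ⟨Aset, ⟨hstrong, ⟨v, hAv⟩, hAuniv, ?_⟩, hAv, hcontain⟩
  intro M' hM' hss
  by_contra hMu
  have hsub : M' ⊆ Aset := hcontain M' hM'.1 hMu (hss.subset hAv)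
  exact hss.ne (subset_antisymm hss.subset hsub)

end GallaiAux

/-- For a connected graph on at least two vertices, the quotient
graph Q̃(G) is either complete or prime. -/
theorem stmt_10 {V : Type*} [Fintype V] (G : SimpleGraph V) (hconn : G.Connected)
    (h2 : 2 ≤ Fintype.card V) :
    (∀ A B, A ≠ B → (QuotientGraph G).Adj A B) ∨ IsPrimeGraph (QuotientGraph G) := by
  classical
  by_cases hcc : Gᶜ.Preconnected
  · -- complement connected: quotient is prime
    right
    have hc := hconn.preconnected
    have hne2 : ∀ v : V, ∃ w : V, w ≠ v := fun v =>
      Fintype.exists_ne_of_one_lt_card (by omega) v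
    choose A hAmax hAmem hAbig using exists_part G hc hcc hne2
    have hdisj : ∀ {p q : V}, A p ≠ A q → A p ∩ A q = ∅ := by
      intro p q h
      by_contra hne'
      exact h (maxStrong_eq_of_overlap (hAmax p) (hAmax q) (Set.nonempty_iff_ne_empty.mpr hne'))
    have hpart : ∀ (Mset : Set V), IsMaximalStrongModule G Mset → ∀ v ∈ Mset, Mset = A v :=
      fun Mset hM v hv => maxStrong_eq_of_overlap hM (hAmax v) ⟨v, hv, hAmem v⟩
    have hDich : ∀ p q : V, A p ≠ A q →
        (∀ a ∈ A p, ∀ b ∈ A q, G.Adj a b) ∨ (∀ a ∈ A p, ∀ b ∈ A q, ¬ G.Adj a b) :=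
      fun p q h => module_dichotomy (hAmax p).1.1 (hAmax q).1.1 (hdisj h) ⟨p, hAmem p⟩
    have hKey : ∀ p q : V, A p ≠ A q → IsModule G (A p ∪ A q) → A p ∪ A q = Set.univ := by
      intro p q hne hmod
      by_contra hu
      have hsub : A p ∪ A q ⊆ A p := hAbig p _ hmod hu (Or.inl (hAmem p))
      exact hne (maxStrong_eq_of_overlap (hAmax p) (hAmax q)
        ⟨q, hsub (Or.inr (hAmem q)), hAmem q⟩)
    constructor
    · -- at least four maximal strong modules
      obtain ⟨v1⟩ := hconn.nonempty
      obtain ⟨v2, hv2⟩ : ∃ v2, v2 ∉ A v1 := by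
        by_contra h; push_neg at h
        exact (hAmax v1).2.2.1 (Set.eq_univ_iff_forall.mpr h)
      have h12 : A v1 ≠ A v2 := fun h => hv2 (h.symm ▸ hAmem v2)
      by_cases h3 : ∃ x, x ∉ A v1 ∪ A v2
      · obtain ⟨v3, hv3⟩ := h3
        have h13 : A v1 ≠ A v3 := fun h => hv3 (Or.inl (h.symm ▸ hAmem v3))
        have h23 : A v2 ≠ A v3 := fun h => hv3 (Or.inr (h.symm ▸ hAmem v3))
        by_cases h4 : ∃ x, x ∉ A v1 ∪ A v2 ∪ A v3
        · obtain ⟨v4, hv4⟩ := h4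
          have h14 : A v1 ≠ A v4 := fun h => hv4 (Or.inl (Or.inl (h.symm ▸ hAmem v4)))
          have h24 : A v2 ≠ A v4 := fun h => hv4 (Or.inl (Or.inr (h.symm ▸ hAmem v4)))
          have h34 : A v3 ≠ A v4 := fun h => hv4 (Or.inr (h.symm ▸ hAmem v4))
          rw [Nat.card_coe_set_eq]
          have hsub : ({A v1, A v2, A v3, A v4} : Set (Set V)) ⊆
              {M : Set V | IsMaximalStrongModule G M} := by
            intro M hM
            simp only [Set.mem_insert_iff, Set.mem_singleton_iff] at hM
            rcases hM with rfl | rfl | rfl | rfl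
            exacts [hAmax v1, hAmax v2, hAmax v3, hAmax v4]
          have hfour : ({A v1, A v2, A v3, A v4} : Set (Set V)).ncard = 4 := by
            rw [Set.ncard_insert_of_notMem (by simp [h12, h13, h14]),
              Set.ncard_insert_of_notMem (by simp [h23, h24]),
              Set.ncard_insert_of_notMem (by simp [h34]), Set.ncard_singleton]
          calc (4 : ℕ) = _ := hfour.symm
            _ ≤ _ := Set.ncard_le_ncard hsub (Set.toFinite _)
        · -- exactly three parts: impossible
          exfalso
          push_neg at h4
          have hcov : ∀ x : V, x ∈ A v1 ∨ x ∈ A v2 ∨ x ∈ A v3 := by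
            intro x
            rcases h4 x with (h | h) | h
            exacts [Or.inl h, Or.inr (Or.inl h), Or.inr (Or.inr h)]
          have hUM : ∀ p q r : V, (∀ x : V, x ∈ A p ∨ x ∈ A q ∨ x ∈ A r) →
              A p ≠ A q → A p ≠ A r → A q ≠ A r →
              (((∀ a ∈ A r, ∀ b ∈ A p, G.Adj a b) ∧ (∀ a ∈ A r, ∀ b ∈ A q, G.Adj a b)) ∨
               ((∀ a ∈ A r, ∀ b ∈ A p, ¬ G.Adj a b) ∧ (∀ a ∈ A r, ∀ b ∈ A q, ¬ G.Adj a b))) →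
              False := by
            intro p q r hcov' hpq hpr hqr hst
            have hmod : IsModule G (A p ∪ A q) := by
              intro x hx
              have hxr : x ∈ A r := by
                rcases hcov' x with h | h | h
                · exact absurd (Or.inl h) hx
                · exact absurd (Or.inr h) hx
                · exact h
              rcases hst with ⟨h1, hh2⟩ | ⟨h1, hh2⟩
              · refine Or.inl ?_
                rintro a (ha | ha)
                · exact h1 x hxr a ha
                · exact hh2 x hxr a ha
              · refine Or.inr ?_
                rintro a (ha | ha)
                · exact h1 x hxr a ha
                · exact hh2 x hxr a ha
            have huniv := hKey p q hpq hmod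
            have hrp : r ∉ A p := fun h =>
              hpr (maxStrong_eq_of_overlap (hAmax p) (hAmax r) ⟨r, h, hAmem r⟩)
            have hrq : r ∉ A q := fun h =>
              hqr (maxStrong_eq_of_overlap (hAmax q) (hAmax r) ⟨r, h, hAmem r⟩)
            have hr : r ∈ A p ∪ A q := huniv.symm ▸ Set.mem_univ r
            rcases hr with h | h
            exacts [hrp h, hrq h]
          have flipE : ∀ {p q : V}, (∀ a ∈ A p, ∀ b ∈ A q, G.Adj a b) →
              ∀ a ∈ A q, ∀ b ∈ A p, G.Adj a b :=
            fun h a ha b hb => (h b hb a ha).symm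
          have flipN : ∀ {p q : V}, (∀ a ∈ A p, ∀ b ∈ A q, ¬ G.Adj a b) →
              ∀ a ∈ A q, ∀ b ∈ A p, ¬ G.Adj a b :=
            fun h a ha b hb hab => h b hb a ha hab.symm
          have hcov231 : ∀ x : V, x ∈ A v2 ∨ x ∈ A v3 ∨ x ∈ A v1 := by
            intro x; rcases hcov x with h | h | h <;> tauto
          have hcov132 : ∀ x : V, x ∈ A v1 ∨ x ∈ A v3 ∨ x ∈ A v2 := by
            intro x; rcases hcov x with h | h | h <;> tauto
          rcases hDich v3 v1 h13.symm with s31e | s31n <;>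
            rcases hDich v3 v2 h23.symm with s32e | s32n <;>
              rcases hDich v2 v1 h12.symm with s21e | s21n
          · exact hUM v1 v2 v3 hcov h12 h13 h23 (Or.inl ⟨s31e, s32e⟩)
          · exact hUM v1 v2 v3 hcov h12 h13 h23 (Or.inl ⟨s31e, s32e⟩)
          · exact hUM v2 v3 v1 hcov231 h23 h12.symm h13.symm
              (Or.inl ⟨flipE s21e, flipE s31e⟩)
          · exact hUM v1 v3 v2 hcov132 h13 h12 h23.symm (Or.inr ⟨s21n, flipN s32n⟩)
          · exact hUM v1 v3 v2 hcov132 h13 h12 h23.symm (Or.inl ⟨s21e, flipE s32e⟩)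
          · exact hUM v2 v3 v1 hcov231 h23 h12.symm h13.symm
              (Or.inr ⟨flipN s21n, flipN s31n⟩)
          · exact hUM v1 v2 v3 hcov h12 h13 h23 (Or.inr ⟨s31n, s32n⟩)
          · exact hUM v1 v2 v3 hcov h12 h13 h23 (Or.inr ⟨s31n, s32n⟩)
      · -- exactly two parts: impossible
        exfalso
        push_neg at h3
        rcases hDich v1 v2 h12 with hE | hN
        · obtain ⟨u, w, hu, hw, huw⟩ := cross (S := A v1) (hcc v1 v2) (hAmem v1) hv2
          have hwB : w ∈ A v2 := (h3 w).resolve_left hw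
          exact ((compl_adj _ _ _).mp huw).2 (hE u hu w hwB)
        · obtain ⟨u, w, hu, hw, huw⟩ := cross (S := A v1) (hc v1 v2) (hAmem v1) hv2
          exact hN u hu w ((h3 w).resolve_left hw) huw
    · -- all modules of the quotient are trivial
      intro M hMmod
      by_cases hMe : M = ∅
      · exact Or.inl hMe
      by_cases hMu : M = Set.univ
      · exact Or.inr (Or.inl hMu)
      obtain ⟨B1, hB1⟩ := Set.nonempty_iff_ne_empty.mpr hMe
      by_cases hsing : ∀ B ∈ M, B = B1
      · exact Or.inr (Or.inr ⟨B1, Set.eq_singleton_iff_unique_mem.mpr ⟨hB1, hsing⟩⟩)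
      exfalso
      push_neg at hsing
      obtain ⟨B2, hB2, hB2ne⟩ := hsing
      obtain ⟨B3, hB3⟩ : ∃ B3, B3 ∉ M := by
        by_contra h; push_neg at h; exact hMu (Set.eq_univ_iff_forall.mpr h)
      set N : Set V := {x | ∃ B ∈ M, x ∈ (B : Set V)} with hNdef
      have hNmod : IsModule G N := by
        intro x hx
        have hAxP : A x ∈ {Mset : Set V | IsMaximalStrongModule G Mset} := hAmax x
        set p : {Mset : Set V | IsMaximalStrongModule G Mset} := ⟨A x, hAxP⟩ with hp
        have hpM : p ∉ M := fun h => hx ⟨p, h, hAmem x⟩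
        rcases hMmod p hpM with hall | hnone
        · refine Or.inl ?_
          rintro a ⟨B, hBM, haB⟩
          exact (hall B hBM).2 x (hAmem x) a haB
        · refine Or.inr ?_
          rintro a ⟨B, hBM, haB⟩ hadj
          have hneB : A x ≠ (B : Set V) := by
            intro h
            exact hpM (by rw [show p = B from Subtype.ext h]; exact hBM)
          have hd2 : A x ∩ (B : Set V) = ∅ := by
            by_contra h
            exact hneB (maxStrong_eq_of_overlap (hAmax x) B.2
              (Set.nonempty_iff_ne_empty.mpr h))
          rcases module_dichotomy (hAmax x).1.1
              (B.2 : IsMaximalStrongModule G (B : Set V)).1.1 hd2 ⟨x, hAmem x⟩ with hE | hNo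
          · exact hnone B hBM ⟨fun h => hneB (congrArg Subtype.val h), hE⟩
          · exact hNo x (hAmem x) a haB hadj
      have hNuniv : N ≠ Set.univ := by
        obtain ⟨b3, hb3⟩ := (B3.2 : IsMaximalStrongModule G (B3 : Set V)).2.1
        intro h
        have hb3N : b3 ∈ N := h.symm ▸ Set.mem_univ b3
        obtain ⟨B, hBM, hb3B⟩ := hb3N
        have heq : (B3 : Set V) = (B : Set V) :=
          maxStrong_eq_of_overlap B3.2 B.2 ⟨b3, hb3, hb3B⟩
        exact hB3 (by rw [show B3 = B from Subtype.ext heq]; exact hBM)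
      obtain ⟨u1, hu1⟩ := (B1.2 : IsMaximalStrongModule G (B1 : Set V)).2.1
      obtain ⟨u2, hu2⟩ := (B2.2 : IsMaximalStrongModule G (B2 : Set V)).2.1
      have hNsub : N ⊆ A u1 := hAbig u1 N hNmod hNuniv ⟨B1, hB1, hu1⟩
      have hB1A : (B1 : Set V) = A u1 := hpart _ B1.2 u1 hu1
      have hu2N : u2 ∈ N := ⟨B2, hB2, hu2⟩
      have heq12 : (B2 : Set V) = (B1 : Set V) := by
        apply maxStrong_eq_of_overlap B2.2 B1.2
        exact ⟨u2, hu2, by rw [hB1A]; exact hNsub hu2N⟩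
      exact hB2ne (Subtype.ext heq12)
  · -- complement disconnected: quotient is complete
    left
    intro A B hAB
    refine ⟨hAB, ?_⟩
    obtain ⟨v, hv⟩ := (A.2 : IsMaximalStrongModule G (A : Set V)).2.1
    obtain ⟨w, hw⟩ := (B.2 : IsMaximalStrongModule G (B : Set V)).2.1
    have hA := part_eq_comp G hcc A.2 hv
    have hB := part_eq_comp G hcc B.2 hw
    have hvw : ¬ Gᶜ.Reachable v w := by
      intro h
      exact hAB (Subtype.ext (hA.trans ((GComp_eq h).trans hB.symm)))
    intro a ha b hb
    have hac : a ∈ GComp Gᶜ v := hA ▸ ha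
    have hbc : b ∈ GComp Gᶜ w := hB ▸ hb
    by_contra hadj
    by_cases hab : a = b
    · subst hab
      exact hvw ((mem_GComp.mp hac).trans (mem_GComp.mp hbc).symm)
    · have hca : Gᶜ.Adj a b := (compl_adj _ _ _).mpr ⟨hab, hadj⟩
      exact hvw ((mem_GComp.mp hac).trans (hca.reachable.trans (mem_GComp.mp hbc).symm))
end

section
/- Every connected finite simple graph that contains no induced path on four vertices and no induced cycle on four vertices (i.e., every connected trivially perfect graph) has a universal vertex, that is, a vertex adjacent to all other vertices of the graph. -/
open SimpleGraph

lemma aux_key {V : Type*} (G : SimpleGraph V) {u v : V} (p : G.Walk u v) :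
    u ≠ v → ¬ G.Adj v u →
    ∃ w x, G.Adj v w ∧ G.Adj w x ∧ ¬ G.Adj v x ∧ x ≠ v := by
  induction p with
  | nil => intro h _; exact absurd rfl h
  | @cons a y b h q ih =>
    intro hav hadj
    by_cases hy : y = b
    · subst hy; exact absurd h.symm hadj
    by_cases hvy : G.Adj b y
    · exact ⟨y, a, hvy, h.symm, hadj, hav⟩
    · exact ih hy hvy

/-- Every connected trivially perfect graph (no induced `P₄` or
`C₄`) has a universal vertex. -/
theorem stmt_12 {V : Type*} [Fintype V] (G : SimpleGraph V) (hconn : G.Connected)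
    (hP4 : ¬ HasInducedCopy GraphP4 G) (hC4 : ¬ HasInducedCopy GraphC4 G) :
    ∃ v : V, ∀ u : V, u ≠ v → G.Adj v u := by
  classical
  have hne : Nonempty V := hconn.nonempty
  by_contra hcon
  push_neg at hcon
  obtain ⟨v, -, hv⟩ := Finset.exists_max_image Finset.univ (fun z : V => G.degree z)
    ⟨Classical.arbitrary V, Finset.mem_univ _⟩
  obtain ⟨u, hu, hvu⟩ := hcon v
  obtain ⟨w, x, hvw, hwx, hvx, hxv⟩ := aux_key G ((hconn u v).some) hu hvu
  have hdeg : G.degree w ≤ G.degree v := hv w (Finset.mem_univ w)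
  have hvx' : v ≠ x := fun h => hxv h.symm
  obtain ⟨y, hyv, hyw, hynew⟩ : ∃ y, G.Adj v y ∧ ¬ G.Adj w y ∧ y ≠ w := by
    by_contra hcon2
    push_neg at hcon2
    have hsub : (G.neighborFinset v).erase w ⊆
        ((G.neighborFinset w).erase x).erase v := by
      intro z hz
      simp only [Finset.mem_erase, SimpleGraph.mem_neighborFinset] at *
      obtain ⟨hzw, hzv⟩ := hz
      have hwz : G.Adj w z := by
        by_contra hnwz
        exact hzw (hcon2 z hzv hnwz)
      exact ⟨hzv.ne', fun h => hvx (h ▸ hzv), hwz⟩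
    have hcard := Finset.card_le_card hsub
    rw [Finset.card_erase_of_mem (by simpa [SimpleGraph.mem_neighborFinset] using hvw),
        Finset.card_erase_of_mem (by
          simp only [Finset.mem_erase, SimpleGraph.mem_neighborFinset]
          exact ⟨hvx', hvw.symm⟩),
        Finset.card_erase_of_mem (by simpa [SimpleGraph.mem_neighborFinset] using hwx)]
        at hcard
    have hw2 : 2 ≤ G.degree w := by
      have hsub2 : ({v, x} : Finset V) ⊆ G.neighborFinset w := by
        intro z hz
        simp only [Finset.mem_insert, Finset.mem_singleton] at hz
        rcases hz with rfl | rfl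
        · simpa [SimpleGraph.mem_neighborFinset] using hvw.symm
        · simpa [SimpleGraph.mem_neighborFinset] using hwx
      have := Finset.card_le_card hsub2
      rwa [Finset.card_insert_of_notMem (by simpa using hvx'),
        Finset.card_singleton] at this
    simp only [SimpleGraph.card_neighborFinset_eq_degree] at hcard
    omega
  have hyx : y ≠ x := fun h => hvx (h ▸ hyv)
  have hyv' : y ≠ v := hyv.ne'
  have hvw' : v ≠ w := hvw.ne
  have hwx' : w ≠ x := hwx.ne
  have e01 : G.Adj y v := hyv.symm
  have e10 : G.Adj v y := hyv
  have e12 : G.Adj v w := hvw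
  have e21 : G.Adj w v := hvw.symm
  have e23 : G.Adj w x := hwx
  have e32 : G.Adj x w := hwx.symm
  have n02 : ¬ G.Adj y w := fun h => hyw h.symm
  have n20 : ¬ G.Adj w y := hyw
  have n13 : ¬ G.Adj v x := hvx
  have n31 : ¬ G.Adj x v := fun h => hvx h.symm
  have hinj : Function.Injective ![y, v, w, x] := by
    intro a b hab
    fin_cases a <;> fin_cases b <;> simp_all
  by_cases hxy : G.Adj y x
  · have e03 : G.Adj y x := hxy
    have e30 : G.Adj x y := hxy.symm
    apply hC4
    refine ⟨⟨![y, v, w, x], hinj⟩, ?_⟩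
    intro a b
    fin_cases a <;> fin_cases b <;>
      simp_all [GraphC4, SimpleGraph.fromRel_adj]
  · have n03 : ¬ G.Adj y x := hxy
    have n30 : ¬ G.Adj x y := fun h => hxy h.symm
    apply hP4
    refine ⟨⟨![y, v, w, x], hinj⟩, ?_⟩
    intro a b
    fin_cases a <;> fin_cases b <;>
      simp_all [GraphP4, SimpleGraph.fromRel_adj]
end

section
/- Let G be a finite simple graph whose vertex set is partitioned into three sets U, C1, C2 such that every vertex of U is adjacent to all other vertices of G, C1 and C2 both induce cliques, and there is no edge between C1 and C2. Then opt_asso(G) = min(|U|, |C1|, |C2|). -/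
open SimpleGraph

/-- If `V(G)` is partitioned into a set `U` of universal vertices
and two disjoint cliques `C1`, `C2` with no edge between them, then
`opt_asso(G) = min(|U|, |C1|, |C2|)`. -/
theorem stmt_15 {V : Type*} [Fintype V] (G : SimpleGraph V) (U C1 C2 : Set V)
    (hUC1 : Disjoint U C1) (hUC2 : Disjoint U C2) (hC1C2 : Disjoint C1 C2)
    (hcover : U ∪ C1 ∪ C2 = Set.univ)
    (huniv : ∀ u ∈ U, ∀ v : V, v ≠ u → G.Adj u v)
    (hc1 : G.IsClique C1) (hc2 : G.IsClique C2)
    (hnoedge : ∀ a ∈ C1, ∀ b ∈ C2, ¬ G.Adj a b) :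
    optAsso G = min (min U.ncard C1.ncard) C2.ncard := by
  classical
  have hmem : ∀ v : V, v ∈ U ∨ v ∈ C1 ∨ v ∈ C2 := by
    intro v
    have : v ∈ U ∪ C1 ∪ C2 := hcover ▸ Set.mem_univ v
    rcases this with (h | h) | h
    · exact Or.inl h
    · exact Or.inr (Or.inl h)
    · exact Or.inr (Or.inr h)
  have hassoU : IsAssociationSet G U := by
    intro a b c ha hb hc hab hbc hac
    rcases hmem a with h | h | h
    · exact absurd h ha
    · rcases hmem c with h' | h' | h'
      · exact absurd h' hc
      · exact hc1 h h' hac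
      · rcases hmem b with hb' | hb' | hb'
        · exact absurd hb' hb
        · exact absurd hbc (hnoedge b hb' c h')
        · exact absurd hab (hnoedge a h b hb')
    · rcases hmem c with h' | h' | h'
      · exact absurd h' hc
      · rcases hmem b with hb' | hb' | hb'
        · exact absurd hb' hb
        · exact absurd hab.symm (hnoedge b hb' a h)
        · exact absurd hbc.symm (hnoedge c h' b hb')
      · exact hc2 h h' hac
  have hassoC1 : IsAssociationSet G C1 := by
    intro a b c ha hb hc hab hbc hac
    rcases hmem a with h | h | h
    · exact huniv a h c (Ne.symm hac)
    · exact absurd h ha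
    · rcases hmem c with h' | h' | h'
      · exact (huniv c h' a hac).symm
      · exact absurd h' hc
      · exact hc2 h h' hac
  have hassoC2 : IsAssociationSet G C2 := by
    intro a b c ha hb hc hab hbc hac
    rcases hmem a with h | h | h
    · exact huniv a h c (Ne.symm hac)
    · rcases hmem c with h' | h' | h'
      · exact (huniv c h' a hac).symm
      · exact hc1 h h' hac
      · exact absurd h' hc
    · exact absurd h ha
  have hle : ∀ Y : Set V, IsAssociationSet G Y → optAsso G ≤ Y.ncard := by
    intro Y hY
    exact Nat.sInf_le ⟨Y, hY, rfl⟩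
  have hub : optAsso G ≤ min (min U.ncard C1.ncard) C2.ncard :=
    le_min (le_min (hle U hassoU) (hle C1 hassoC1)) (hle C2 hassoC2)
  have hlb : ∀ n ∈ {n : ℕ | ∃ X : Set V, IsAssociationSet G X ∧ X.ncard = n},
      min (min U.ncard C1.ncard) C2.ncard ≤ n := by
    rintro n ⟨X, hX, rfl⟩
    have hsub : U ⊆ X ∨ C1 ⊆ X ∨ C2 ⊆ X := by
      by_contra hcon
      push_neg at hcon
      obtain ⟨⟨u, hu, huX⟩, ⟨a, ha, haX⟩, ⟨c, hc, hcX⟩⟩ :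
          (∃ u ∈ U, u ∉ X) ∧ (∃ a ∈ C1, a ∉ X) ∧ (∃ c ∈ C2, c ∉ X) := by
        refine ⟨?_, ?_, ?_⟩
        · rcases Set.not_subset.mp hcon.1 with ⟨u, hu, huX⟩; exact ⟨u, hu, huX⟩
        · rcases Set.not_subset.mp hcon.2.1 with ⟨a, ha, haX⟩; exact ⟨a, ha, haX⟩
        · rcases Set.not_subset.mp hcon.2.2 with ⟨c, hc, hcX⟩; exact ⟨c, hc, hcX⟩
      have hau : a ≠ u := fun h => hUC1.ne_of_mem hu ha h.symm
      have hcu : c ≠ u := fun h => hUC2.ne_of_mem hu hc h.symm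
      have hac : a ≠ c := fun h => hC1C2.ne_of_mem ha hc h
      have := hX a u c haX huX hcX (huniv u hu a hau).symm (huniv u hu c hcu) hac
      exact hnoedge a ha c hc this
    rcases hsub with h | h | h
    · exact le_trans (min_le_left _ _) (le_trans (min_le_left _ _)
        (Set.ncard_le_ncard h (Set.toFinite X)))
    · exact le_trans (min_le_left _ _) (le_trans (min_le_right _ _)
        (Set.ncard_le_ncard h (Set.toFinite X)))
    · exact le_trans (min_le_right _ _) (Set.ncard_le_ncard h (Set.toFinite X))
  have hne : {n : ℕ | ∃ X : Set V, IsAssociationSet G X ∧ X.ncard = n}.Nonempty :=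
    ⟨U.ncard, U, hassoU, rfl⟩
  exact le_antisymm hub (hlb _ (Nat.sInf_mem hne))
end

section
/- Let G be a finite simple graph and M a module of G such that the induced subgraph G[M] is a cluster graph but not a clique, and such that N_G(M) = {v} for a single vertex v. Then opt_asso(G) = opt_asso(G − N_G[M]) + 1, where N_G[M] = M ∪ {v}. -/
open SimpleGraph

/-- If a module `M` induces a cluster graph that is not a clique
and has exactly one neighbor `v`, then `opt_asso(G) = opt_asso(G - N[M]) + 1`. -/
theorem stmt_16 {V : Type*} [Fintype V] (G : SimpleGraph V) (M : Set V) (v : V)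
    (hmod : IsModule G M)
    (hcluster : ∀ a ∈ M, ∀ b ∈ M, ∀ c ∈ M, G.Adj a b → G.Adj b c → a ≠ c → G.Adj a c)
    (hnc : ¬ G.IsClique M)
    (hN : {u : V | u ∉ M ∧ ∃ a ∈ M, G.Adj u a} = {v}) :
    optAsso G = optAsso (G.induce (M ∪ {v})ᶜ) + 1 := by
  classical
  set S : Set V := (M ∪ {v})ᶜ with hS
  have hmemS : ∀ x : V, x ∈ S ↔ (x ∉ M ∧ x ≠ v) := by
    intro x
    simp only [hS, Set.mem_compl_iff, Set.mem_union, Set.mem_singleton_iff, not_or, and_comm]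
  -- basic facts about v
  have hvmem : v ∈ {u : V | u ∉ M ∧ ∃ a ∈ M, G.Adj u a} := by rw [hN]; rfl
  obtain ⟨hvM, a₀, ha₀M, hva₀⟩ := hvmem
  have hvall : ∀ a ∈ M, G.Adj v a := by
    rcases hmod v hvM with h | h
    · exact h
    · exact absurd hva₀ (h a₀ ha₀M)
  have honlyv : ∀ w, w ∉ M → (∃ a ∈ M, G.Adj w a) → w = v := by
    intro w hwM hex
    have : w ∈ {u : V | u ∉ M ∧ ∃ a ∈ M, G.Adj u a} := ⟨hwM, hex⟩
    rwa [hN] at this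
  obtain ⟨a, haM, b, hbM, hab, hnadj⟩ : ∃ a ∈ M, ∃ b ∈ M, a ≠ b ∧ ¬ G.Adj a b := by
    by_contra h
    push_neg at h
    exact hnc fun x hx y hy hxy => h x hx y hy hxy
  have hne1 : {n : ℕ | ∃ X : Set V, IsAssociationSet G X ∧ X.ncard = n}.Nonempty :=
    ⟨(Set.univ : Set V).ncard, Set.univ,
      fun p q r hp _ _ _ _ _ => absurd (Set.mem_univ p) hp, rfl⟩
  have hne2 : {n : ℕ | ∃ X : Set ↥S, IsAssociationSet (G.induce S) X ∧ X.ncard = n}.Nonempty :=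
    ⟨(Set.univ : Set ↥S).ncard, Set.univ,
      fun p q r hp _ _ _ _ _ => absurd (Set.mem_univ p) hp, rfl⟩
  have hle : optAsso G ≤ optAsso (G.induce S) + 1 := by
    obtain ⟨X', hX', hcard'⟩ := Nat.sInf_mem hne2
    set X : Set V := insert v (Subtype.val '' X') with hXdef
    have hassoc : IsAssociationSet G X := by
      intro p q r hp hq hr hpq hqr hpr
      have hpv : p ≠ v := fun h => hp (h ▸ Set.mem_insert _ _)
      have hqv : q ≠ v := fun h => hq (h ▸ Set.mem_insert _ _)
      have hrv : r ≠ v := fun h => hr (h ▸ Set.mem_insert _ _)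
      by_cases hqM : q ∈ M
      · have hpM : p ∈ M := by
          by_contra hpM
          exact hpv (honlyv p hpM ⟨q, hqM, hpq⟩)
        have hrM : r ∈ M := by
          by_contra hrM
          exact hrv (honlyv r hrM ⟨q, hqM, hqr.symm⟩)
        exact hcluster p hpM q hqM r hrM hpq hqr hpr
      · have hpM : p ∉ M := by
          intro hpM
          exact hqv (honlyv q hqM ⟨p, hpM, hpq.symm⟩)
        have hrM : r ∉ M := by
          intro hrM
          exact hqv (honlyv q hqM ⟨r, hrM, hqr⟩)
        have hpS : p ∈ S := (hmemS p).2 ⟨hpM, hpv⟩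
        have hqS : q ∈ S := (hmemS q).2 ⟨hqM, hqv⟩
        have hrS : r ∈ S := (hmemS r).2 ⟨hrM, hrv⟩
        have hp' : (⟨p, hpS⟩ : ↥S) ∉ X' := fun h =>
          hp (Set.mem_insert_of_mem _ ⟨⟨p, hpS⟩, h, rfl⟩)
        have hq' : (⟨q, hqS⟩ : ↥S) ∉ X' := fun h =>
          hq (Set.mem_insert_of_mem _ ⟨⟨q, hqS⟩, h, rfl⟩)
        have hr' : (⟨r, hrS⟩ : ↥S) ∉ X' := fun h =>
          hr (Set.mem_insert_of_mem _ ⟨⟨r, hrS⟩, h, rfl⟩)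
        exact hX' ⟨p, hpS⟩ ⟨q, hqS⟩ ⟨r, hrS⟩ hp' hq' hr' hpq hqr
          (fun h => hpr (congrArg Subtype.val h))
    have hvnot : v ∉ (Subtype.val '' X' : Set V) := by
      rintro ⟨w, _, hw⟩
      have := w.2
      rw [hmemS] at this
      exact this.2 hw
    have hXcard : X.ncard = X'.ncard + 1 := by
      rw [hXdef, Set.ncard_insert_of_notMem hvnot (Set.toFinite _),
        Set.ncard_image_of_injective _ Subtype.val_injective]
    have : optAsso G ≤ X.ncard := Nat.sInf_le ⟨X, hassoc, rfl⟩
    rw [hXcard, hcard'] at this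
    exact this
  have hge : optAsso (G.induce S) + 1 ≤ optAsso G := by
    obtain ⟨X, hX, hcard⟩ := Nat.sInf_mem hne1
    set X' : Set ↥S := Subtype.val ⁻¹' X with hX'def
    have hassoc' : IsAssociationSet (G.induce S) X' := by
      intro p q r hp hq hr hpq hqr hpr
      exact hX p q r hp hq hr hpq hqr (fun h => hpr (Subtype.ext h))
    -- X meets M ∪ {v}
    obtain ⟨x, hxX, hxMv⟩ : ∃ x, x ∈ X ∧ x ∈ M ∪ {v} := by
      by_cases hvX : v ∈ X
      · exact ⟨v, hvX, Or.inr rfl⟩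
      by_cases haX : a ∈ X
      · exact ⟨a, haX, Or.inl haM⟩
      by_cases hbX : b ∈ X
      · exact ⟨b, hbX, Or.inl hbM⟩
      exact absurd (hX a v b haX hvX hbX (hvall a haM).symm (hvall b hbM) hab) hnadj
    have himg : Subtype.val '' X' = X ∩ S := by
      rw [hX'def, Set.image_preimage_eq_inter_range, Subtype.range_coe]
    have hXcard' : X'.ncard = (X ∩ S).ncard := by
      rw [← himg, Set.ncard_image_of_injective _ Subtype.val_injective]
    have hxS : x ∉ X ∩ S := by
      rintro ⟨-, hxS⟩
      exact hxS hxMv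
    have hsub : insert x (X ∩ S) ⊆ X := by
      intro y hy
      rcases hy with rfl | hy
      · exact hxX
      · exact hy.1
    have hcount : (X ∩ S).ncard + 1 ≤ X.ncard := by
      have h1 : (insert x (X ∩ S)).ncard = (X ∩ S).ncard + 1 :=
        Set.ncard_insert_of_notMem hxS (Set.toFinite _)
      have h2 : (insert x (X ∩ S)).ncard ≤ X.ncard :=
        Set.ncard_le_ncard hsub (Set.toFinite _)
      omega
    have hinf : optAsso (G.induce S) ≤ X'.ncard := Nat.sInf_le ⟨X', hassoc', rfl⟩
    have hopt : X.ncard = optAsso G := hcard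
    rw [hXcard'] at hinf
    omega
  exact le_antisymm hle hge
end

section
/- Let G be a finite simple graph and M a module of G that induces a clique. Then every association set X of G of minimum cardinality satisfies M ⊆ X or M ∩ X = ∅. -/
open SimpleGraph

/-- A minimum-cardinality association set contains all or none of
each clique module. -/
theorem stmt_17 {V : Type*} [Fintype V] (G : SimpleGraph V) (M : Set V)
    (hmod : IsModule G M) (hclique : G.IsClique M) (X : Set V)
    (hX : IsAssociationSet G X)
    (hmin : ∀ Y : Set V, IsAssociationSet G Y → X.ncard ≤ Y.ncard) :
    M ⊆ X ∨ M ∩ X = ∅ := by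
  by_contra h
  push_neg at h
  obtain ⟨hns, hne⟩ := h
  rw [Set.not_subset] at hns
  obtain ⟨v, hvM, hvX⟩ := hns
  obtain ⟨u, huM, huX⟩ := hne
  have huv : u ≠ v := fun h => hvX (h ▸ huX)
  have adj_v : ∀ x, G.Adj x u → x ≠ v → G.Adj x v := by
    intro x hadj hxv
    by_cases hxM : x ∈ M
    · exact hclique hxM hvM hxv
    · rcases hmod x hxM with h | h
      · exact h v hvM
      · exact absurd hadj (h u huM)
  have adj_u : ∀ x, G.Adj x v → x ≠ u → G.Adj x u := by
    intro x hadj hxu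
    by_cases hxM : x ∈ M
    · exact hclique hxM huM hxu
    · rcases hmod x hxM with h | h
      · exact h u huM
      · exact absurd hadj (h v hvM)
  have huvadj : G.Adj u v := hclique huM hvM huv
  have hassoc : IsAssociationSet G (X \ {u}) := by
    intro a b c ha hb hc hab hbc hac
    simp only [Set.mem_diff, Set.mem_singleton_iff, not_and, not_not] at ha hb hc
    by_cases haX : a ∈ X
    · have hau : a = u := ha haX
      rw [hau] at hab hac ⊢
      have hbu : b ≠ u := hab.ne'
      have hcu : c ≠ u := Ne.symm hac
      have hbX : b ∉ X := fun h => hbu (hb h)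
      have hcX : c ∉ X := fun h => hcu (hc h)
      by_cases hvc : v = c
      · exact hvc ▸ huvadj
      · by_cases hvb : v = b
        · exact (adj_u c (hvb ▸ hbc.symm) hcu).symm
        · have h1 : G.Adj v b := (adj_v b hab.symm (Ne.symm hvb)).symm
          have h2 : G.Adj v c := hX v b c hvX hbX hcX h1 hbc hvc
          exact (adj_u c h2.symm hcu).symm
    · by_cases hbX : b ∈ X
      · have hbu : b = u := hb hbX
        rw [hbu] at hab hbc
        have hau : a ≠ u := hab.ne
        have hcu : c ≠ u := hbc.ne'
        have haX' : a ∉ X := fun h => hau (ha h)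
        have hcX : c ∉ X := fun h => hcu (hc h)
        by_cases hva : v = a
        · rw [← hva]
          exact (adj_v c hbc.symm (fun h => hac ((hva.symm.trans h.symm)))).symm
        · by_cases hvc : v = c
          · rw [← hvc]
            exact adj_v a hab (Ne.symm hva)
          · have h1 : G.Adj a v := adj_v a hab (Ne.symm hva)
            have h2 : G.Adj c v := adj_v c hbc.symm (Ne.symm hvc)
            exact hX a v c haX' hvX hcX h1 h2.symm hac
      · by_cases hcX : c ∈ X
        · have hcu : c = u := hc hcX
          rw [hcu] at hbc hac ⊢
          have hau : a ≠ u := hac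
          have hbu : b ≠ u := hbc.ne
          have haX' : a ∉ X := fun h => hau (ha h)
          have hbX' : b ∉ X := fun h => hbu (hb h)
          by_cases hva : v = a
          · exact hva ▸ huvadj.symm
          · by_cases hvb : v = b
            · exact adj_u a (hvb ▸ hab) hau
            · have h1 : G.Adj b v := adj_v b hbc (Ne.symm hvb)
              have h2 : G.Adj a v := hX a b v haX' hbX' hvX hab h1 (Ne.symm hva)
              exact adj_u a h2 hau
        · exact hX a b c haX hbX hcX hab hbc hac
  have hlt : (X \ {u}).ncard < X.ncard :=
    Set.ncard_diff_singleton_lt_of_mem huX (Set.toFinite X)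
  exact absurd (hmin _ hassoc) (not_le.mpr hlt)
end
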